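/- Let A be a 2×2 integer matrix and s ≥ 2 a positive integer. If the gcd of the four entries of A^s is greater than 1, then the gcd of the four entries of A^2 is greater than 1. -/

import Mathlib

open Matrix in
lemma aux_cayley {R : Type*} [CommRing R] (B : Matrix (Fin 2) (Fin 2) R) :
    B ^ 2 = B.trace • B - B.det • (1 : Matrix (Fin 2) (Fin 2) R) := by
  ext i j
  fin_cases i <;> fin_cases j <;>
    simp [pow_two, Matrix.mul_apply, Fin.sum_univ_two, Matrix.trace,
      Matrix.det_fin_two, Matrix.one_apply, Matrix.trace_fin_two] <;> ring

open Matrix in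
lemma aux_sq_zero {K : Type*} [Field K] (B : Matrix (Fin 2) (Fin 2) K)
    (s : ℕ) (hs : 2 ≤ s) (hB : B ^ s = 0) : B ^ 2 = 0 := by
  have hdet : B.det = 0 := by
    have : B.det ^ s = 0 := by simp [← Matrix.det_pow, hB]
    exact pow_eq_zero_iff (by omega) |>.mp this
  have hsq : B ^ 2 = B.trace • B := by
    rw [aux_cayley, hdet, zero_smul, sub_zero]
  have key : ∀ k : ℕ, B ^ (k + 1) = B.trace ^ k • B := by
    intro k
    induction k with
    | zero => simp
    | succ n ih =>
        have : B ^ (n + 1 + 1) = B ^ (n + 1) * B := pow_succ B (n+1)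
        rw [this, ih, Matrix.smul_mul, ← pow_two, hsq, smul_smul, ← pow_succ]
  obtain ⟨m, rfl⟩ : ∃ m, s = m + 1 := ⟨s - 1, by omega⟩
  rw [key m] at hB
  rcases smul_eq_zero.mp hB with ht | hB0
  · have : B.trace = 0 := pow_eq_zero_iff (by omega) |>.mp ht
    rw [hsq, this, zero_smul]
  · rw [pow_two, hB0, Matrix.mul_zero]

/-- For a `2 × 2` integer matrix `A` and `s ≥ 2`: if the gcd of the entries of
`A ^ s` exceeds `1`, then so does the gcd of the entries of `A ^ 2`. -/
theorem stmt_7 (A : Matrix (Fin 2) (Fin 2) ℤ) (s : ℕ) (hs : 2 ≤ s)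
    (h : 1 < Int.gcd (Int.gcd ((A ^ s) 0 0) ((A ^ s) 0 1))
        (Int.gcd ((A ^ s) 1 0) ((A ^ s) 1 1))) :
    1 < Int.gcd (Int.gcd ((A ^ 2) 0 0) ((A ^ 2) 0 1))
        (Int.gcd ((A ^ 2) 1 0) ((A ^ 2) 1 1)) := by
  by_cases hz : A ^ 2 = 0
  · exfalso
    have hAs : A ^ s = 0 := by
      obtain ⟨m, rfl⟩ : ∃ m, s = 2 + m := ⟨s - 2, by omega⟩
      rw [pow_add, hz, Matrix.zero_mul]
    simp [hAs] at h
  · set g := Int.gcd (Int.gcd ((A ^ s) 0 0) ((A ^ s) 0 1))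
        (Int.gcd ((A ^ s) 1 0) ((A ^ s) 1 1)) with hg
    set p := g.minFac with hpdef
    have hp : p.Prime := Nat.minFac_prime (by omega)
    haveI : Fact p.Prime := ⟨hp⟩
    have hpg : (p : ℤ) ∣ (g : ℤ) := Int.natCast_dvd_natCast.mpr (Nat.minFac_dvd g)
    have hpd : ∀ i j, (p : ℤ) ∣ (A ^ s) i j := by
      have h00 := dvd_trans (dvd_trans hpg (Int.gcd_dvd_left _ _)) (Int.gcd_dvd_left _ _)
      have h01 := dvd_trans (dvd_trans hpg (Int.gcd_dvd_left _ _)) (Int.gcd_dvd_right _ _)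
      have h10 := dvd_trans (dvd_trans hpg (Int.gcd_dvd_right _ _)) (Int.gcd_dvd_left _ _)
      have h11 := dvd_trans (dvd_trans hpg (Int.gcd_dvd_right _ _)) (Int.gcd_dvd_right _ _)
      intro i j
      fin_cases i <;> fin_cases j <;> assumption
    set B := (Int.castRingHom (ZMod p)).mapMatrix A with hBdef
    have hBs : B ^ s = 0 := by
      rw [← map_pow]
      ext i j
      simpa [RingHom.mapMatrix_apply, Matrix.map_apply,
        ZMod.intCast_zmod_eq_zero_iff_dvd] using hpd i j
    have hB2 : B ^ 2 = 0 := aux_sq_zero B s hs hBs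
    have hpd2 : ∀ i j, (p : ℤ) ∣ (A ^ 2) i j := by
      intro i j
      rw [← ZMod.intCast_zmod_eq_zero_iff_dvd]
      have : ((Int.castRingHom (ZMod p)).mapMatrix (A ^ 2)) i j = 0 := by
        rw [map_pow, ← hBdef, hB2]; rfl
      simpa [RingHom.mapMatrix_apply, Matrix.map_apply] using this
    have hdvd : (p : ℤ) ∣ (Int.gcd (Int.gcd ((A ^ 2) 0 0) ((A ^ 2) 0 1))
        (Int.gcd ((A ^ 2) 1 0) ((A ^ 2) 1 1)) : ℤ) :=
      Int.dvd_coe_gcd (Int.dvd_coe_gcd (hpd2 0 0) (hpd2 0 1))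
        (Int.dvd_coe_gcd (hpd2 1 0) (hpd2 1 1))
    have hdvd' : p ∣ Int.gcd (Int.gcd ((A ^ 2) 0 0) ((A ^ 2) 0 1))
        (Int.gcd ((A ^ 2) 1 0) ((A ^ 2) 1 1)) := Int.natCast_dvd_natCast.mp hdvd
    have hne : Int.gcd (Int.gcd ((A ^ 2) 0 0) ((A ^ 2) 0 1))
        (Int.gcd ((A ^ 2) 1 0) ((A ^ 2) 1 1)) ≠ 0 := by
      intro h0
      apply hz
      rw [Int.gcd_eq_zero_iff] at h0
      obtain ⟨h0a, h0b⟩ := h0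
      rw [Int.natCast_eq_zero, Int.gcd_eq_zero_iff] at h0a h0b
      obtain ⟨e00, e01⟩ := h0a
      obtain ⟨e10, e11⟩ := h0b
      ext i j
      fin_cases i <;> fin_cases j <;> assumption
    calc 1 < p := hp.one_lt
      _ ≤ _ := Nat.le_of_dvd (Nat.pos_of_ne_zero hne) hdvd'
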